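/- Assume each φᵢ is twice continuously differentiable, that P is nonempty and compact, that either C = ∅ or inf{‖c − p‖ : c ∈ C, p ∈ P} > 0, and that for every κ > 0, inf{‖e(ξ)‖ : ξ ∈ ℝⁿ, dist(ξ, P) ≥ κ} > 0. Then the desired path P is asymptotically stable for the guiding vector field, in the following sense: (i) (stability) for every ε > 0 there exists δ > 0 such that every differentiable ξ : [0,∞) → ℝⁿ with ξ′(t) = χ(ξ(t)) for all t ≥ 0 and dist(ξ(0), P) < δ satisfies dist(ξ(t), P) < ε for all t ≥ 0; (ii) (attractivity) there exists an open set U ⊇ P such that every such solution with ξ(0) ∈ U satisfies dist(ξ(t), P) → 0 as t → ∞. -/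

import Mathlib

open scoped RealInnerProductSpace

theorem stmt9 (n : ℕ) (hn : 2 ≤ n)
    (k : Fin (n - 1) → ℝ) (hk : ∀ i, 0 < k i)
    (φ : Fin (n - 1) → EuclideanSpace ℝ (Fin n) → ℝ)
    (hφ : ∀ i, ContDiff ℝ 2 (φ i))
    (bot : EuclideanSpace ℝ (Fin n) → EuclideanSpace ℝ (Fin n))
    (hbot : ∀ ξ u : EuclideanSpace ℝ (Fin n),
      ⟪bot ξ, u⟫ = Matrix.det (Matrix.of (fun (i j : Fin n) =>
        if h : (j : ℕ) < n - 1 then gradient (φ ⟨j, h⟩) ξ i else u i)))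
    (χ : EuclideanSpace ℝ (Fin n) → EuclideanSpace ℝ (Fin n))
    (hχ : ∀ ξ, χ ξ = bot ξ - ∑ i, (k i * φ i ξ) • gradient (φ i) ξ)
    (P C : Set (EuclideanSpace ℝ (Fin n)))
    (hP : P = {ξ | ∀ i, φ i ξ = 0})
    (hC : C = {ξ | χ ξ = 0})
    (e : EuclideanSpace ℝ (Fin n) → EuclideanSpace ℝ (Fin (n - 1)))
    (he : ∀ ξ i, e ξ i = φ i ξ)
    (hPne : P.Nonempty) (hPcomp : IsCompact P)
    (hCP : C = ∅ ∨ ∃ d > (0 : ℝ), ∀ c ∈ C, ∀ p ∈ P, d ≤ ‖c - p‖)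
    (herr : ∀ κ > (0 : ℝ), ∃ m > (0 : ℝ), ∀ ξ : EuclideanSpace ℝ (Fin n),
      κ ≤ Metric.infDist ξ P → m ≤ ‖e ξ‖) :
    (∀ ε > (0 : ℝ), ∃ δ > (0 : ℝ), ∀ ξ : ℝ → EuclideanSpace ℝ (Fin n),
        (∀ t : ℝ, 0 ≤ t → HasDerivAt ξ (χ (ξ t)) t) →
        Metric.infDist (ξ 0) P < δ →
        ∀ t : ℝ, 0 ≤ t → Metric.infDist (ξ t) P < ε) ∧
    (∃ U : Set (EuclideanSpace ℝ (Fin n)), IsOpen U ∧ P ⊆ U ∧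
        ∀ ξ : ℝ → EuclideanSpace ℝ (Fin n),
          (∀ t : ℝ, 0 ≤ t → HasDerivAt ξ (χ (ξ t)) t) →
          ξ 0 ∈ U →
          Filter.Tendsto (fun t => Metric.infDist (ξ t) P) Filter.atTop (nhds 0)) := by
  obtain ⟨m, rfl⟩ : ∃ m, n = m + 1 := ⟨n - 1, by omega⟩
  have hm : 1 ≤ m := by omega
  have hmn : m + 1 - 1 = m := rfl
  have : Nonempty (Fin (m + 1 - 1)) := ⟨⟨0, by omega⟩⟩
  obtain ⟨i₀, hi₀⟩ := Finite.exists_min k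
  -- basic differentiability facts
  have diffφ : ∀ i, Differentiable ℝ (φ i) := fun i => (hφ i).differentiable two_ne_zero
  have gradInner : ∀ i x (v : EuclideanSpace ℝ (Fin (m + 1))),
      fderiv ℝ (φ i) x v = ⟪gradient (φ i) x, v⟫ := by
    intro i x v
    simp [gradient, InnerProductSpace.toDual_symm_apply]
  have contGrad : ∀ i, Continuous (fun x => gradient (φ i) x) := fun i =>
    (InnerProductSpace.toDual ℝ _).symm.continuous.comp ((hφ i).continuous_fderiv two_ne_zero)
  set s : EuclideanSpace ℝ (Fin (m + 1)) → EuclideanSpace ℝ (Fin (m + 1)) :=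
    fun x => ∑ i, (k i * φ i x) • gradient (φ i) x with hsdef
  have conts : Continuous s := by
    apply continuous_finset_sum
    intro i _
    exact (continuous_const.mul (hφ i).continuous).smul (contGrad i)
  -- orthogonality of bot to the gradients
  have botOrth : ∀ x i, ⟪bot x, gradient (φ i) x⟫ = 0 := by
    intro x i
    rw [hbot]
    apply Matrix.det_zero_of_column_eq (i := Fin.castSucc i) (j := Fin.last m)
    · exact (Fin.castSucc_lt_last i).ne
    · intro r
      simp [Matrix.of_apply, Fin.is_lt, Fin.eta]
  -- inner products with s
  have sInner : ∀ x (v : EuclideanSpace ℝ (Fin (m + 1))),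
      ⟪s x, v⟫ = ∑ i, (k i * φ i x) * ⟪gradient (φ i) x, v⟫ := by
    intro x v
    simp only [hsdef]
    rw [sum_inner]
    apply Finset.sum_congr rfl
    intro i _
    rw [real_inner_smul_left]
  -- if the gradients are dependent through s = 0 with e ≠ 0 then bot = 0
  have botZero : ∀ x, (∃ i, φ i x ≠ 0) → s x = 0 → bot x = 0 := by
    intro x hex hsx
    obtain ⟨i₁, hi₁⟩ := hex
    rw [← @inner_self_eq_zero ℝ]
    rw [hbot]
    rw [← Matrix.exists_mulVec_eq_zero_iff]
    refine ⟨fun j => if h : (j : ℕ) < m then k ⟨j, h⟩ * φ ⟨j, h⟩ x else 0, ?_, ?_⟩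
    · intro h0
      have := congrFun h0 (Fin.castSucc i₁)
      simp only [Fin.coe_castSucc, Fin.is_lt, dif_pos, Fin.eta, Pi.zero_apply] at this
      exact hi₁ (by
        have hk' := (hk i₁).ne'
        rcases mul_eq_zero.mp this with h | h
        · exact absurd h hk'
        · exact h)
    · funext r
      have hin := sInner x (EuclideanSpace.single r 1)
      rw [hsx, inner_zero_left] at hin
      have hsr : ∑ i, (k i * φ i x) * gradient (φ i) x r = 0 := by
        simp only [EuclideanSpace.inner_single_right, one_mul, RCLike.conj_to_real,
          starRingEnd_apply, star_trivial] at hin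
        exact hin.symm
      simp only [Matrix.mulVec, dotProduct, Matrix.of_apply]
      rw [Fin.sum_univ_castSucc]
      simpa [Fin.is_lt, Fin.eta, mul_comm] using hsr
  have keyInner : ∀ x, ⟪s x, χ x⟫ = -‖s x‖ ^ 2 := by
    intro x
    rw [hχ x, inner_sub_right]
    have h1 : ⟪s x, bot x⟫ = 0 := by
      rw [sInner]
      apply Finset.sum_eq_zero
      intro i _
      rw [real_inner_comm, botOrth x i, mul_zero]
    rw [h1, real_inner_self_eq_norm_sq]
    ring
  -- Lyapunov function
  set V : EuclideanSpace ℝ (Fin (m + 1)) → ℝ := fun x => ∑ i, k i * (φ i x) ^ 2 with hVdef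
  have Vnonneg : ∀ x, 0 ≤ V x := by
    intro x
    apply Finset.sum_nonneg
    intro i _
    exact mul_nonneg (hk i).le (sq_nonneg _)
  have Vcont : Continuous V := by
    apply continuous_finset_sum
    intro i _
    exact continuous_const.mul ((hφ i).continuous.pow 2)
  have VP : ∀ p ∈ P, V p = 0 := by
    intro p hp
    rw [hP] at hp
    simp [hVdef, hp _]
  -- derivative of V along trajectories
  have hVtraj : ∀ (ξtr : ℝ → EuclideanSpace ℝ (Fin (m + 1)))
      (_ : ∀ t, 0 ≤ t → HasDerivAt ξtr (χ (ξtr t)) t) (t : ℝ), 0 ≤ t →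
      HasDerivAt (fun u => V (ξtr u)) (-(2 * ‖s (ξtr t)‖ ^ 2)) t := by
    intro ξtr hξ t ht
    have h1 : ∀ i, HasDerivAt (fun u => φ i (ξtr u))
        ⟪gradient (φ i) (ξtr t), χ (ξtr t)⟫ t := by
      intro i
      have := ((diffφ i (ξtr t)).hasFDerivAt).comp_hasDerivAt t (hξ t ht)
      rw [gradInner] at this
      exact this
    have h2 := HasDerivAt.sum (fun i (_ : i ∈ Finset.univ) => (((h1 i).pow 2).const_mul (k i)))
    have hval : ∑ i, k i * ((2 : ℕ) * φ i (ξtr t) ^ (2 - 1) *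
        ⟪gradient (φ i) (ξtr t), χ (ξtr t)⟫) = -(2 * ‖s (ξtr t)‖ ^ 2) := by
      have hsi := sInner (ξtr t) (χ (ξtr t))
      have hki := keyInner (ξtr t)
      calc ∑ i, k i * ((2 : ℕ) * φ i (ξtr t) ^ (2 - 1) *
            ⟪gradient (φ i) (ξtr t), χ (ξtr t)⟫)
          = 2 * ∑ i, (k i * φ i (ξtr t)) * ⟪gradient (φ i) (ξtr t), χ (ξtr t)⟫ := by
            rw [Finset.mul_sum]
            apply Finset.sum_congr rfl
            intro i _
            push_cast
            ring
        _ = 2 * ⟪s (ξtr t), χ (ξtr t)⟫ := by rw [← hsi]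
        _ = -(2 * ‖s (ξtr t)‖ ^ 2) := by rw [hki]; ring
    simp only [hVdef]
    rw [← hval]
    have hf : (fun u => ∑ i, k i * φ i (ξtr u) ^ 2) =
        ∑ i, fun y => k i * ((fun u => φ i (ξtr u)) ^ 2) y := by
      funext u
      simp [Finset.sum_apply]
    rw [hf]
    exact h2
  -- decay estimate
  have decay : ∀ (ξtr : ℝ → EuclideanSpace ℝ (Fin (m + 1)))
      (_ : ∀ t, 0 ≤ t → HasDerivAt ξtr (χ (ξtr t)) t) (c : ℝ),
      (∀ t, 0 ≤ t → c ≤ 2 * ‖s (ξtr t)‖ ^ 2) →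
      AntitoneOn (fun t => V (ξtr t) + c * t) (Set.Ici (0 : ℝ)) := by
    intro ξtr hξ c hc
    have hct : ∀ t : ℝ, HasDerivAt (fun u : ℝ => c * u) c t := fun t => by
      simpa using (hasDerivAt_id t).const_mul c
    apply antitoneOn_of_deriv_nonpos (convex_Ici 0)
    · intro t ht
      exact (((hVtraj ξtr hξ t ht).add (hct t)).continuousAt).continuousWithinAt
    · intro t ht
      rw [interior_Ici] at ht
      exact (((hVtraj ξtr hξ t ht.le).add
        (hct t))).differentiableAt.differentiableWithinAt
    · intro t ht
      rw [interior_Ici] at ht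
      have h := (hVtraj ξtr hξ t ht.le).add (hct t)
      rw [show (fun t => V (ξtr t) + c * t) = ((fun u => V (ξtr u)) + fun u => c * u) from rfl, h.deriv]
      have := hc t ht.le
      linarith
  have Vle : ∀ (ξtr : ℝ → EuclideanSpace ℝ (Fin (m + 1)))
      (_ : ∀ t, 0 ≤ t → HasDerivAt ξtr (χ (ξtr t)) t) (a b : ℝ), 0 ≤ a → a ≤ b →
      V (ξtr b) ≤ V (ξtr a) := by
    intro ξtr hξ a b ha hab
    have h := decay ξtr hξ 0 (fun t _ => by positivity)
    have := h (Set.mem_Ici.mpr ha) (Set.mem_Ici.mpr (ha.trans hab)) hab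
    simpa using this
  -- norm of e controlled by V
  have normE : ∀ x (M : ℝ), 0 < M → V x < k i₀ * M ^ 2 → ‖e x‖ < M := by
    intro x M hM h
    have h2 : k i₀ * ∑ i, (φ i x) ^ 2 ≤ V x := by
      rw [Finset.mul_sum]
      apply Finset.sum_le_sum
      intro i _
      have := hi₀ i
      nlinarith [sq_nonneg (φ i x)]
    have h1 : ∑ i, (φ i x) ^ 2 < M ^ 2 := by nlinarith [hk i₀]
    have h3 : ‖e x‖ ^ 2 = ∑ i, (φ i x) ^ 2 := by
      rw [EuclideanSpace.norm_eq, Real.sq_sqrt (by positivity)]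
      apply Finset.sum_congr rfl
      intro i _
      rw [he]
      rw [Real.norm_eq_abs, sq_abs]
    nlinarith [norm_nonneg (e x)]
  -- stability
  have stab : ∀ ε > (0 : ℝ), ∃ δ > (0 : ℝ), ∀ ξtr : ℝ → EuclideanSpace ℝ (Fin (m + 1)),
      (∀ t, 0 ≤ t → HasDerivAt ξtr (χ (ξtr t)) t) →
      Metric.infDist (ξtr 0) P < δ → ∀ t, 0 ≤ t → Metric.infDist (ξtr t) P < ε := by
    intro ε hε
    obtain ⟨M, hM, hMe⟩ := herr ε hε
    have hηpos : 0 < k i₀ * M ^ 2 := mul_pos (hk i₀) (by positivity)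
    have hopen : IsOpen (V ⁻¹' Set.Iio (k i₀ * M ^ 2)) := isOpen_Iio.preimage Vcont
    have hsub : P ⊆ V ⁻¹' Set.Iio (k i₀ * M ^ 2) := fun p hp => by
      simp [Set.mem_preimage, VP p hp, hηpos]
    obtain ⟨δ, hδ, hthick⟩ := hPcomp.exists_thickening_subset_open hopen hsub
    refine ⟨δ, hδ, ?_⟩
    intro ξtr hξ h0 t ht
    have h1 : V (ξtr 0) < k i₀ * M ^ 2 :=
      hthick ((Metric.mem_thickening_iff_infDist_lt hPne).mpr h0)
    have h2 : V (ξtr t) < k i₀ * M ^ 2 := lt_of_le_of_lt (Vle ξtr hξ 0 t le_rfl ht) h1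
    by_contra hcon
    push_neg at hcon
    exact absurd (hMe _ hcon) (not_le.mpr (normE _ M hM h2))
  refine ⟨stab, ?_⟩
  -- attractivity
  obtain ⟨ε₀, hε₀, hCfar⟩ : ∃ ε₀ > (0 : ℝ), ∀ x ∈ C, ¬(Metric.infDist x P ≤ ε₀) := by
    rcases hCP with h | ⟨d, hd, hdC⟩
    · exact ⟨1, one_pos, fun x hx => absurd hx (by simp [h])⟩
    · refine ⟨d / 2, by linarith, ?_⟩
      intro x hx hle
      have hge : d ≤ Metric.infDist x P := by
        by_contra hlt
        push_neg at hlt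
        obtain ⟨p, hp, hdp⟩ := (Metric.infDist_lt_iff hPne).mp hlt
        have := hdC x hx p hp
        rw [dist_eq_norm] at hdp
        linarith
      linarith
  obtain ⟨δ₀, hδ₀, hδ₀stab⟩ := stab ε₀ hε₀
  refine ⟨Metric.thickening δ₀ P, Metric.isOpen_thickening,
    Metric.self_subset_thickening hδ₀ P, ?_⟩
  intro ξtr hξ hU
  have h0 : Metric.infDist (ξtr 0) P < δ₀ :=
    (Metric.mem_thickening_iff_infDist_lt hPne).mp hU
  have hdist : ∀ t, 0 ≤ t → Metric.infDist (ξtr t) P < ε₀ := hδ₀stab ξtr hξ h0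
  have main : ∀ η > (0 : ℝ), ∃ T, 0 ≤ T ∧ V (ξtr T) < η := by
    intro η hη
    by_contra hcon
    push_neg at hcon
    set A : Set (EuclideanSpace ℝ (Fin (m + 1))) :=
      {x | Metric.infDist x P ≤ ε₀ ∧ η ≤ V x} with hA
    have hAclosed : IsClosed A :=
      (isClosed_le (Metric.continuous_infDist_pt P) continuous_const).inter
        (isClosed_le continuous_const Vcont)
    have hAsub : A ⊆ Metric.cthickening ε₀ P := by
      intro x hx
      rw [Metric.mem_cthickening_iff]
      have hne : Metric.infEDist x P ≠ ⊤ := Metric.infEdist_ne_top hPne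
      rw [← ENNReal.ofReal_toReal hne]
      exact ENNReal.ofReal_le_ofReal hx.1
    have hAcomp : IsCompact A := (hPcomp.cthickening).of_isClosed_subset hAclosed hAsub
    have hmemA : ∀ t, 0 ≤ t → ξtr t ∈ A := fun t ht => ⟨(hdist t ht).le, hcon t ht⟩
    have hsA : ∀ x ∈ A, s x ≠ 0 := by
      intro x hx hsx
      have hφx : ∃ i, φ i x ≠ 0 := by
        by_contra hall
        push_neg at hall
        have hV0 : V x = 0 := by simp [hVdef, hall]
        have := hx.2
        linarith
      have hbx : bot x = 0 := botZero x hφx hsx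
      have hχx : χ x = 0 := by
        rw [hχ x, hbx, show ∑ i, (k i * φ i x) • gradient (φ i) x = 0 from hsx]
        simp
      exact hCfar x (by rw [hC]; exact hχx) hx.1
    obtain ⟨x₀, hx₀A, hx₀min⟩ :=
      hAcomp.exists_isMinOn ⟨ξtr 0, hmemA 0 le_rfl⟩ (conts.norm.continuousOn)
    have hc : 0 < 2 * ‖s x₀‖ ^ 2 := by
      have := hsA x₀ hx₀A
      have : 0 < ‖s x₀‖ := norm_pos_iff.mpr this
      nlinarith
    set c := 2 * ‖s x₀‖ ^ 2 with hcdef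
    have hcle : ∀ t, 0 ≤ t → c ≤ 2 * ‖s (ξtr t)‖ ^ 2 := by
      intro t ht
      have hmin := (isMinOn_iff.mp hx₀min) _ (hmemA t ht)
      nlinarith [norm_nonneg (s x₀)]
    have hanti := decay ξtr hξ c hcle
    set T := (V (ξtr 0) + 1) / c with hTdef
    have hT : 0 ≤ T := div_nonneg (by linarith [Vnonneg (ξtr 0)]) hc.le
    have hle := hanti (Set.self_mem_Ici) (Set.mem_Ici.mpr hT) hT
    have hcT : c * T = V (ξtr 0) + 1 := by
      rw [hTdef]
      field_simp
    simp only [mul_zero, add_zero] at hle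
    rw [hcT] at hle
    linarith [Vnonneg (ξtr T)]
  rw [Metric.tendsto_atTop]
  intro κ hκ
  obtain ⟨M, hM, hMe⟩ := herr κ hκ
  obtain ⟨T, hT0, hTV⟩ := main (k i₀ * M ^ 2) (mul_pos (hk i₀) (by positivity))
  refine ⟨T, ?_⟩
  intro t ht
  have h2 : V (ξtr t) < k i₀ * M ^ 2 := lt_of_le_of_lt (Vle ξtr hξ T t hT0 ht) hTV
  have h3 : Metric.infDist (ξtr t) P < κ := by
    by_contra hcon
    push_neg at hcon
    exact absurd (hMe _ hcon) (not_le.mpr (normE _ M hM h2))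
  rw [Real.dist_eq, sub_zero, abs_of_nonneg Metric.infDist_nonneg]
  exact h3
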